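/- Let f : ℝ^{d_x} × ℝ^{d_y} → ℝ be differentiable and suppose that for every y the map x ↦ ∇_x f(x,y) is L_x-Lipschitz and for every x the map y ↦ ∇_y f(x,y) is L_y-Lipschitz. Then for all μ₁ > 0, μ₂ > 0 and all (x,y), the map x ↦ f_{μ₁}(x,y) is differentiable with ‖∇_x f_{μ₁}(x,y) − ∇_x f(x,y)‖² ≤ μ₁² d_x² L_x² / 4, and the map y ↦ f_{μ₂}(x,y) is differentiable with ‖∇_y f_{μ₂}(x,y) − ∇_y f(x,y)‖² ≤ μ₂² d_y² L_y² / 4. -/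

import Mathlib

open MeasureTheory Metric
open scoped ENNReal RealInnerProductSpace

/-- Uniform probability measure on the closed unit Euclidean ball of `ℝ^d`
(normalized Lebesgue measure on the ball). -/
noncomputable def ballUniform (d : ℕ) : Measure (EuclideanSpace ℝ (Fin d)) :=
  (volume (closedBall (0 : EuclideanSpace ℝ (Fin d)) 1))⁻¹ •
    volume.restrict (closedBall (0 : EuclideanSpace ℝ (Fin d)) 1)

/-- Uniform probability measure on the unit Euclidean sphere of `ℝ^d`, realized as the
pushforward of the uniform measure on the unit ball under the radial projection
`x ↦ x/‖x‖`; this coincides with the normalized surface (rotation invariant) measure. -/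
noncomputable def sphereUniform (d : ℕ) : Measure (EuclideanSpace ℝ (Fin d)) :=
  (ballUniform d).map fun x => ‖x‖⁻¹ • x

section Helpers

variable {d : ℕ}

lemma vol_cb_pos : 0 < volume (closedBall (0 : EuclideanSpace ℝ (Fin d)) 1) :=
  lt_of_lt_of_le (measure_ball_pos _ _ one_pos) (measure_mono ball_subset_closedBall)

lemma vol_cb_lt_top : volume (closedBall (0 : EuclideanSpace ℝ (Fin d)) 1) < ⊤ :=
  measure_closedBall_lt_top

lemma isProb : IsProbabilityMeasure (ballUniform d) := by
  constructor
  rw [ballUniform, Measure.smul_apply, Measure.restrict_apply_univ, smul_eq_mul,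
    ENNReal.inv_mul_cancel vol_cb_pos.ne' vol_cb_lt_top.ne]

-- the key integral computation
lemma integral_norm_ballUniform (hd : 1 ≤ d) :
    ∫ u, ‖u‖ ∂(ballUniform d) = d / (d + 1) := by
  haveI : Nonempty (Fin d) := ⟨⟨0, hd⟩⟩
  haveI : Nontrivial (EuclideanSpace ℝ (Fin d)) :=
    ⟨0, EuclideanSpace.single ⟨0, hd⟩ 1, by
      intro h
      have := congrArg norm h
      simp [EuclideanSpace.norm_single] at this⟩
  set c := volume (closedBall (0 : EuclideanSpace ℝ (Fin d)) 1) with hc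
  have hdim : Module.finrank ℝ (EuclideanSpace ℝ (Fin d)) = d := finrank_euclideanSpace_fin
  have key : ∫ x in closedBall (0 : EuclideanSpace ℝ (Fin d)) 1, ‖x‖ ∂volume
      = d * (volume (ball (0 : EuclideanSpace ℝ (Fin d)) 1)).toReal * (1 / (d + 1)) := by
    have h1 : ∫ x in closedBall (0 : EuclideanSpace ℝ (Fin d)) 1, ‖x‖ ∂volume
        = ∫ x, Set.indicator (Set.Icc (0:ℝ) 1) id ‖x‖ ∂(volume : Measure (EuclideanSpace ℝ (Fin d))) := by
      rw [← integral_indicator (measurableSet_closedBall)]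
      congr 1
      ext x
      by_cases hx : x ∈ closedBall (0 : EuclideanSpace ℝ (Fin d)) 1
      · rw [Set.indicator_of_mem hx, Set.indicator_of_mem]
        · rfl
        · exact ⟨norm_nonneg x, by simpa [mem_closedBall_zero_iff] using hx⟩
      · rw [Set.indicator_of_notMem hx, Set.indicator_of_notMem]
        intro hmem
        exact hx (by simpa [mem_closedBall_zero_iff] using hmem.2)
    rw [h1, integral_fun_norm_addHaar volume (Set.indicator (Set.Icc (0:ℝ) 1) id), hdim]
    have h2 : ∫ y in Set.Ioi (0:ℝ), y ^ (d - 1) • Set.indicator (Set.Icc (0:ℝ) 1) id y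
        = 1 / (d + 1) := by
      have : ∀ y : ℝ, y ^ (d - 1) • Set.indicator (Set.Icc (0:ℝ) 1) id y
          = Set.indicator (Set.Icc (0:ℝ) 1) (fun y => y ^ (d-1) * y) y := by
        intro y
        by_cases hy : y ∈ Set.Icc (0:ℝ) 1 <;> simp [hy]
      simp_rw [this]
      rw [integral_indicator measurableSet_Icc, Measure.restrict_restrict measurableSet_Icc]
      have : Set.Icc (0:ℝ) 1 ∩ Set.Ioi 0 = Set.Ioc (0:ℝ) 1 := by
        ext z; simp [Set.mem_Ioc, Set.mem_Icc, Set.mem_Ioi, and_comm]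
        intro h h2; exact h.le
      rw [this]
      have hpow : ∀ y : ℝ, y ^ (d-1) * y = y ^ d := by
        intro y
        rw [← pow_succ, Nat.sub_add_cancel hd]
      simp_rw [hpow]
      rw [← intervalIntegral.integral_of_le (zero_le_one), integral_pow]
      simp
    rw [h2]
    simp only [nsmul_eq_mul, smul_eq_mul, measureReal_def]
    ring
  have hballcb : volume (ball (0 : EuclideanSpace ℝ (Fin d)) 1) = c := by
    exact (Measure.addHaar_closedBall_eq_addHaar_ball volume 0 1).symm
  rw [ballUniform, integral_smul_measure, key, hballcb, ENNReal.toReal_inv, smul_eq_mul]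
  have hc0 : c.toReal ≠ 0 := ENNReal.toReal_ne_zero.mpr ⟨vol_cb_pos.ne', vol_cb_lt_top.ne⟩
  field_simp
  rw [← hc, div_self hc0]

open scoped RealInnerProductSpace

lemma key_lemma (hd : 1 ≤ d) (g : EuclideanSpace ℝ (Fin d) → ℝ) (hg : Differentiable ℝ g)
    {L : ℝ} (hL : ∀ x₁ x₂, ‖gradient g x₁ - gradient g x₂‖ ≤ L * ‖x₁ - x₂‖)
    {μ : ℝ} (hμ : 0 < μ) (x : EuclideanSpace ℝ (Fin d)) :
    Differentiable ℝ (fun x' => ∫ u, g (x' + μ • u) ∂(ballUniform d)) ∧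
      ‖gradient (fun x' => ∫ u, g (x' + μ • u) ∂(ballUniform d)) x - gradient g x‖ ^ 2
        ≤ μ ^ 2 * (d : ℝ) ^ 2 * L ^ 2 / 4 := by
  haveI : IsProbabilityMeasure (ballUniform d) := isProb
  set ν := ballUniform d with hν
  -- L is nonnegative
  have hL0 : 0 ≤ L := by
    have := hL (EuclideanSpace.single ⟨0, hd⟩ (1:ℝ)) 0
    have h1 : ‖EuclideanSpace.single (⟨0, hd⟩ : Fin d) (1:ℝ)‖ = 1 := by
      simp [EuclideanSpace.norm_single]
    rw [sub_zero, h1, mul_one] at this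
    exact le_trans (norm_nonneg _) this
  -- relation between fderiv and gradient
  have hfd : ∀ z, fderiv ℝ g z = (InnerProductSpace.toDual ℝ _) (gradient g z) := by
    intro z; simp [gradient]
  have hfdnorm : ∀ a b : EuclideanSpace ℝ (Fin d),
      ‖fderiv ℝ g a - fderiv ℝ g b‖ = ‖gradient g a - gradient g b‖ := by
    intro a b
    rw [hfd a, hfd b, ← map_sub, LinearIsometryEquiv.norm_map]
  -- continuity of fderiv
  have hgradcont : Continuous (gradient g) := by
    apply LipschitzWith.continuous (K := L.toNNReal)
    apply LipschitzWith.of_dist_le_mul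
    intro a b
    rw [dist_eq_norm, dist_eq_norm, Real.coe_toNNReal L hL0]
    exact hL a b
  have hfdcont : Continuous (fun z => fderiv ℝ g z) := by
    have : (fun z => fderiv ℝ g z)
        = fun z => (InnerProductSpace.toDual ℝ _) (gradient g z) := funext hfd
    rw [this]
    exact (InnerProductSpace.toDual ℝ _).continuous.comp hgradcont
  -- integrability helper
  have hIntble : ∀ {F : EuclideanSpace ℝ (Fin d) → ℝ} (_ : Continuous F),
      Integrable F ν := by
    intro F hF
    rw [hν, ballUniform]
    exact ((hF.continuousOn.integrableOn_compact (isCompact_closedBall _ _))).smul_measure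
      (ENNReal.inv_ne_top.mpr vol_cb_pos.ne')
  have hIntbleL : ∀ {F : EuclideanSpace ℝ (Fin d) →
      (EuclideanSpace ℝ (Fin d) →L[ℝ] ℝ)} (_ : Continuous F), Integrable F ν := by
    intro F hF
    rw [hν, ballUniform]
    exact ((hF.continuousOn.integrableOn_compact (isCompact_closedBall _ _))).smul_measure
      (ENNReal.inv_ne_top.mpr vol_cb_pos.ne')
  -- ae bound on the norm
  have hae : ∀ᵐ u ∂ν, ‖u‖ ≤ 1 := by
    rw [hν, ballUniform]
    apply Measure.ae_smul_measure
    filter_upwards [ae_restrict_mem measurableSet_closedBall] with u hu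
    simpa [mem_closedBall_zero_iff] using hu
  -- main differentiation under the integral
  have main : ∀ x₀ : EuclideanSpace ℝ (Fin d),
      HasFDerivAt (fun x' => ∫ u, g (x' + μ • u) ∂ν)
        (∫ u, fderiv ℝ g (x₀ + μ • u) ∂ν) x₀ := by
    intro x₀
    apply hasFDerivAt_integral_of_dominated_of_fderiv_le
      (F' := fun x' u => fderiv ℝ g (x' + μ • u))
      (bound := fun _ => ‖fderiv ℝ g x₀‖ + L * (1 + μ)) (ball_mem_nhds x₀ one_pos)
    · filter_upwards with x'
      exact ((hg.continuous.comp (by fun_prop)).aestronglyMeasurable)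
    · exact hIntble (hg.continuous.comp (by fun_prop))
    · exact (hfdcont.comp (by fun_prop)).aestronglyMeasurable
    · filter_upwards [hae] with u hu
      intro x' hx'
      have h1 : ‖fderiv ℝ g (x' + μ • u) - fderiv ℝ g x₀‖ ≤ L * (1 + μ) := by
        rw [hfdnorm]
        refine (hL _ _).trans ?_
        have : ‖x' + μ • u - x₀‖ ≤ 1 + μ := by
          calc ‖x' + μ • u - x₀‖ = ‖(x' - x₀) + μ • u‖ := by rw [add_sub_right_comm]
            _ ≤ ‖x' - x₀‖ + ‖μ • u‖ := norm_add_le _ _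
            _ ≤ 1 + μ := by
              have := mem_ball_iff_norm.mp hx'
              have h2 : ‖μ • u‖ ≤ μ := by
                rw [norm_smul, Real.norm_eq_abs, abs_of_pos hμ]
                nlinarith [norm_nonneg u]
              linarith
        exact mul_le_mul_of_nonneg_left this hL0
      calc ‖fderiv ℝ g (x' + μ • u)‖
          ≤ ‖fderiv ℝ g x₀‖ + ‖fderiv ℝ g (x' + μ • u) - fderiv ℝ g x₀‖ := by
            simpa using norm_add_le (fderiv ℝ g x₀) (fderiv ℝ g (x' + μ • u) - fderiv ℝ g x₀)
        _ ≤ ‖fderiv ℝ g x₀‖ + L * (1 + μ) := by linarith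
    · exact integrable_const _
    · filter_upwards with u
      intro x' _
      have haff : HasFDerivAt (fun x' : EuclideanSpace ℝ (Fin d) => x' + μ • u)
          (ContinuousLinearMap.id ℝ _) x' := (hasFDerivAt_id x').add_const (μ • u)
      have := (hg (x' + μ • u)).hasFDerivAt.comp x' haff
      simpa [Function.comp_def] using this
  constructor
  · exact fun x' => (main x').differentiableAt
  · -- the gradient gap bound
    have hgradF : gradient (fun x' => ∫ u, g (x' + μ • u) ∂ν) x
        = (InnerProductSpace.toDual ℝ _).symm (∫ u, fderiv ℝ g (x + μ • u) ∂ν) := by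
      rw [gradient, (main x).fderiv]
    have hnorm_eq : ‖gradient (fun x' => ∫ u, g (x' + μ • u) ∂ν) x - gradient g x‖
        = ‖(∫ u, fderiv ℝ g (x + μ • u) ∂ν) - fderiv ℝ g x‖ := by
      rw [hgradF, gradient, ← map_sub, LinearIsometryEquiv.norm_map]
    have hint1 : Integrable (fun u => fderiv ℝ g (x + μ • u)) ν :=
      hIntbleL (hfdcont.comp (by fun_prop))
    have hsub : (∫ u, fderiv ℝ g (x + μ • u) ∂ν) - fderiv ℝ g x
        = ∫ u, (fderiv ℝ g (x + μ • u) - fderiv ℝ g x) ∂ν := by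
      rw [integral_sub hint1 (integrable_const _), integral_const, probReal_univ]
      simp
    have hbound : ‖(∫ u, fderiv ℝ g (x + μ • u) ∂ν) - fderiv ℝ g x‖
        ≤ L * μ * ((d : ℝ) / (d + 1)) := by
      rw [hsub]
      refine (norm_integral_le_integral_norm _).trans ?_
      have hmono : ∫ u, ‖fderiv ℝ g (x + μ • u) - fderiv ℝ g x‖ ∂ν
          ≤ ∫ u, L * μ * ‖u‖ ∂ν := by
        apply integral_mono ((hint1.sub (integrable_const _)).norm)
          ((hIntble continuous_norm).const_mul (L * μ))
        intro u
        simp only [Pi.sub_apply]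
        rw [hfdnorm]
        calc ‖gradient g (x + μ • u) - gradient g x‖ ≤ L * ‖x + μ • u - x‖ := hL _ _
          _ = L * μ * ‖u‖ := by
            rw [add_sub_cancel_left, norm_smul, Real.norm_eq_abs, abs_of_pos hμ]; ring
      refine hmono.trans ?_
      rw [integral_const_mul, integral_norm_ballUniform hd]
    have hfrac : (d : ℝ) / (d + 1) ≤ (d : ℝ) / 2 := by
      apply div_le_div_of_nonneg_left (by positivity) two_pos
      have : (1:ℝ) ≤ d := by exact_mod_cast hd
      linarith
    have hfinal : ‖gradient (fun x' => ∫ u, g (x' + μ • u) ∂ν) x - gradient g x‖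
        ≤ μ * d * L / 2 := by
      rw [hnorm_eq]
      refine hbound.trans ?_
      have : L * μ * ((d : ℝ) / (d + 1)) ≤ L * μ * ((d : ℝ) / 2) :=
        mul_le_mul_of_nonneg_left hfrac (by positivity)
      linarith [this]
    calc ‖gradient (fun x' => ∫ u, g (x' + μ • u) ∂ν) x - gradient g x‖ ^ 2
        ≤ (μ * d * L / 2) ^ 2 := pow_le_pow_left₀ (norm_nonneg _) hfinal 2
      _ = μ ^ 2 * (d : ℝ) ^ 2 * L ^ 2 / 4 := by ring

end Helpers

/-- The smoothed functions are differentiable in each variable and their partial gradients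
are within `μ d L / 2` of the corresponding partial gradients of `f`. -/
theorem smoothed_gradient_gap
    (dx dy : ℕ) (hdx : 1 ≤ dx) (hdy : 1 ≤ dy)
    (f : EuclideanSpace ℝ (Fin dx) → EuclideanSpace ℝ (Fin dy) → ℝ)
    (hdiff : Differentiable ℝ
      fun p : EuclideanSpace ℝ (Fin dx) × EuclideanSpace ℝ (Fin dy) => f p.1 p.2)
    (Lx Ly : ℝ)
    (hlipx : ∀ (y : EuclideanSpace ℝ (Fin dy)) (x₁ x₂ : EuclideanSpace ℝ (Fin dx)),
      ‖gradient (fun x => f x y) x₁ - gradient (fun x => f x y) x₂‖ ≤ Lx * ‖x₁ - x₂‖)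
    (hlipy : ∀ (x : EuclideanSpace ℝ (Fin dx)) (y₁ y₂ : EuclideanSpace ℝ (Fin dy)),
      ‖gradient (fun y => f x y) y₁ - gradient (fun y => f x y) y₂‖ ≤ Ly * ‖y₁ - y₂‖)
    (μ₁ μ₂ : ℝ) (hμ₁ : 0 < μ₁) (hμ₂ : 0 < μ₂) :
    ∀ (x : EuclideanSpace ℝ (Fin dx)) (y : EuclideanSpace ℝ (Fin dy)),
      (Differentiable ℝ (fun x' => ∫ u, f (x' + μ₁ • u) y ∂(ballUniform dx)) ∧
        ‖gradient (fun x' => ∫ u, f (x' + μ₁ • u) y ∂(ballUniform dx)) x -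
            gradient (fun x' => f x' y) x‖ ^ 2 ≤ μ₁ ^ 2 * (dx : ℝ) ^ 2 * Lx ^ 2 / 4) ∧
      (Differentiable ℝ (fun y' => ∫ v, f x (y' + μ₂ • v) ∂(ballUniform dy)) ∧
        ‖gradient (fun y' => ∫ v, f x (y' + μ₂ • v) ∂(ballUniform dy)) y -
            gradient (fun y' => f x y') y‖ ^ 2 ≤ μ₂ ^ 2 * (dy : ℝ) ^ 2 * Ly ^ 2 / 4) := by
  intro x y
  constructor
  · exact key_lemma hdx (fun x' => f x' y)
      (hdiff.comp (differentiable_id.prodMk (differentiable_const y))) (hlipx y) hμ₁ x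
  · exact key_lemma hdy (fun y' => f x y')
      (hdiff.comp ((differentiable_const x).prodMk differentiable_id)) (hlipy x) hμ₂ y
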